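/- Let V be a finite type, let F be a nonempty superset-closed family of finsets of V, let k be a natural number, and let S1 and S2 be members of F with |S1| = |S2| = k. Then S1 and S2 are joined by a path in the k-token-jumping graph of F (the simple graph whose vertices are the members of F of cardinality exactly k, with two such members adjacent if and only if their symmetric difference has exactly two elements) if and only if S1 and S2 are joined by a path in the (k+1)-TAR graph of F. -/

import Mathlib

variable {V : Type*} [Fintype V] [DecidableEq V]

/-- A family of finsets is superset-closed if it is closed under taking supersets. -/
def SupersetClosed (F : Finset (Finset V)) : Prop :=
  ∀ ⦃S T : Finset V⦄, S ∈ F → S ⊆ T → T ∈ F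

/-- A minimal member of a family: a member no proper subset of which is a member. -/
def IsMinimalMem (F : Finset (Finset V)) (M : Finset V) : Prop :=
  M ∈ F ∧ ∀ M' : Finset V, M' ⊂ M → M' ∉ F

/-- The TAR graph of a family of finsets: vertices are the members of the family,
two members being adjacent iff their symmetric difference has exactly one element. -/
def TARGraph (F : Finset (Finset V)) : SimpleGraph {S : Finset V // S ∈ F} where
  Adj S T := (symmDiff S.1 T.1).card = 1
  symm := ⟨fun S T h => by simpa only [symmDiff_comm] using h⟩
  loopless := ⟨fun S h => by simp [symmDiff_self] at h⟩

instance (F : Finset (Finset V)) : DecidableRel (TARGraph F).Adj :=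
  fun S T => inferInstanceAs (Decidable ((symmDiff S.1 T.1).card = 1))

/-- The `k`-TAR graph: the subgraph of the TAR graph induced on members of
cardinality at most `k`. -/
def kTARGraph (F : Finset (Finset V)) (k : ℕ) :
    SimpleGraph {S : Finset V // S ∈ F ∧ S.card ≤ k} where
  Adj S T := (symmDiff S.1 T.1).card = 1
  symm := ⟨fun S T h => by simpa only [symmDiff_comm] using h⟩
  loopless := ⟨fun S h => by simp [symmDiff_self] at h⟩

/-- The `k`-token-jumping graph: vertices are the members of the family of
cardinality exactly `k`, two such members being adjacent iff their symmetric
difference has exactly two elements. -/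
def TJGraph (F : Finset (Finset V)) (k : ℕ) :
    SimpleGraph {S : Finset V // S ∈ F ∧ S.card = k} where
  Adj S T := (symmDiff S.1 T.1).card = 2
  symm := ⟨fun S T h => by simpa only [symmDiff_comm] using h⟩
  loopless := ⟨fun S h => by simp [symmDiff_self] at h⟩

lemma symmDiff_card_one_iff' {S T : Finset V} (h : (symmDiff S T).card = 1) :
    (∃ a, a ∈ S ∧ T = S.erase a) ∨ (∃ a, a ∉ S ∧ T = insert a S) := by
  rw [Finset.card_eq_one] at h
  obtain ⟨a, ha⟩ := h
  have hm : ∀ x, ((x ∈ S ∧ x ∉ T) ∨ (x ∈ T ∧ x ∉ S)) ↔ x = a := by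
    intro x
    rw [← Finset.mem_symmDiff, ha, Finset.mem_singleton]
  by_cases haS : a ∈ S
  · left
    refine ⟨a, haS, ?_⟩
    ext x
    have := hm x
    simp only [Finset.mem_erase]
    by_cases hx : x = a
    · subst hx; tauto
    · by_cases hxS : x ∈ S <;> tauto
  · right
    refine ⟨a, haS, ?_⟩
    ext x
    have := hm x
    simp only [Finset.mem_insert]
    by_cases hx : x = a
    · subst hx; tauto
    · by_cases hxS : x ∈ S <;> tauto

lemma tj_sub_step (F : Finset (Finset V)) (k : ℕ) {S X Y : Finset V}
    (hX : X ∈ F) (hY : Y ∈ F) (hXc : X.card = k) (hYc : Y.card = k)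
    (hXS : X ⊆ S) (hYS : Y ⊆ S) (hSc : S.card ≤ k + 1) :
    (TJGraph F k).Reachable ⟨X, hX, hXc⟩ ⟨Y, hY, hYc⟩ := by
  by_cases hXY : X = Y
  · subst hXY; rfl
  · apply SimpleGraph.Adj.reachable
    show (symmDiff X Y).card = 2
    have h1 : (X \ Y).card = 1 := by
      have hle : (X \ Y).card ≤ 1 := by
        calc (X \ Y).card ≤ (S \ Y).card :=
              Finset.card_le_card (Finset.sdiff_subset_sdiff hXS le_rfl)
          _ = S.card - Y.card := Finset.card_sdiff_of_subset hYS
          _ ≤ 1 := by omega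
      have hne : (X \ Y).Nonempty := by
        rw [Finset.sdiff_nonempty]
        intro hc
        exact hXY (Finset.eq_of_subset_of_card_le hc (by omega))
      have := Finset.card_pos.mpr hne
      omega
    have h2 : (Y \ X).card = 1 := by
      have hle : (Y \ X).card ≤ 1 := by
        calc (Y \ X).card ≤ (S \ X).card :=
              Finset.card_le_card (Finset.sdiff_subset_sdiff hYS le_rfl)
          _ = S.card - X.card := Finset.card_sdiff_of_subset hXS
          _ ≤ 1 := by omega
      have hne : (Y \ X).Nonempty := by
        rw [Finset.sdiff_nonempty]
        intro hc
        exact hXY (Finset.eq_of_subset_of_card_le hc (by omega)).symm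
      have := Finset.card_pos.mpr hne
      omega
    rw [symmDiff_def, Finset.sup_eq_union, Finset.card_union_of_disjoint disjoint_sdiff_sdiff]
    omega

lemma tar_step (F : Finset (Finset V)) (hsup : SupersetClosed F) (k : ℕ)
    {A C : Finset V} (hA : A ∈ F) (hC : C ∈ F)
    (hAc : A.card ≤ k + 1) (hCc : C.card ≤ k + 1)
    (hadj : (symmDiff A C).card = 1)
    (X : Finset V) (hX : X ∈ F) (hXc : X.card = k) (hInv : A ⊆ X ∨ X ⊆ A) :
    ∃ (Y : Finset V) (hY : Y ∈ F) (hYc : Y.card = k), (C ⊆ Y ∨ Y ⊆ C) ∧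
      (TJGraph F k).Reachable ⟨X, hX, hXc⟩ ⟨Y, hY, hYc⟩ := by
  rcases symmDiff_card_one_iff' hadj with ⟨a, haA, rfl⟩ | ⟨a, haA, rfl⟩
  · -- C = A.erase a
    rcases hInv with hAX | hXA
    · exact ⟨X, hX, hXc, Or.inl ((Finset.erase_subset a A).trans hAX), by rfl⟩
    · by_cases haX : a ∈ X
      · -- a ∈ X ⊆ A
        by_cases hAk : A.card = k + 1
        · -- jump from X to A.erase a, both card-k subsets of A
          have hEc : (A.erase a).card = k := by
            rw [Finset.card_erase_of_mem haA]; omega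
          exact ⟨A.erase a, hC, hEc, Or.inl subset_rfl,
            tj_sub_step F k hX hC hXc hEc hXA (Finset.erase_subset a A) hAc⟩
        · -- A.card ≤ k, so X = A
          have hXA' : X = A := Finset.eq_of_subset_of_card_le hXA (by omega)
          subst hXA'
          exact ⟨X, hX, hXc, Or.inl (Finset.erase_subset a X), by rfl⟩
      · exact ⟨X, hX, hXc, Or.inr (Finset.subset_erase.mpr ⟨hXA, haX⟩), by rfl⟩
  · -- C = insert a A, a ∉ A
    have hAk : A.card ≤ k := by
      have := Finset.card_insert_of_notMem haA
      omega
    rcases hInv with hAX | hXA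
    · by_cases haX : a ∈ X
      · exact ⟨X, hX, hXc, Or.inl (Finset.insert_subset haX hAX), by rfl⟩
      · by_cases hAck : A.card = k
        · have : A = X := Finset.eq_of_subset_of_card_le hAX (by omega)
          subst this
          exact ⟨A, hX, hXc, Or.inr (Finset.subset_insert a A), by rfl⟩
        · -- A.card < k : swap some b ∈ X \ A for a
          have hne : (X \ A).Nonempty := by
            rw [Finset.sdiff_nonempty]
            intro hc
            have := Finset.card_le_card hc
            omega
          obtain ⟨b, hb⟩ := hne
          rw [Finset.mem_sdiff] at hb
          obtain ⟨hbX, hbA⟩ := hb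
          have hab : a ≠ b := fun h => haX (h ▸ hbX)
          refine ⟨insert a (X.erase b), ?_, ?_, Or.inl ?_, ?_⟩
          · exact hsup hC (Finset.insert_subset_insert a
              (Finset.subset_erase.mpr ⟨hAX, hbA⟩))
          · rw [Finset.card_insert_of_notMem (fun h => haX (Finset.mem_of_mem_erase h)),
              Finset.card_erase_of_mem hbX]
            have : 0 < X.card := Finset.card_pos.mpr ⟨b, hbX⟩
            omega
          · exact Finset.insert_subset_insert a (Finset.subset_erase.mpr ⟨hAX, hbA⟩)
          · apply SimpleGraph.Adj.reachable
            show (symmDiff X (insert a (X.erase b))).card = 2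
            have : symmDiff X (insert a (X.erase b)) = {a, b} := by
              ext x
              simp only [Finset.mem_symmDiff, Finset.mem_insert, Finset.mem_erase,
                Finset.mem_singleton]
              by_cases hx : x = a
              · subst hx; tauto
              · by_cases hx' : x = b
                · subst hx'; tauto
                · by_cases hxX : x ∈ X <;> tauto
            rw [this, Finset.card_pair hab]
    · -- X ⊆ A ⊆ insert a A
      exact ⟨X, hX, hXc, Or.inr (hXA.trans (Finset.subset_insert a A)), by rfl⟩

lemma tar_to_tj_aux (F : Finset (Finset V)) (hsup : SupersetClosed F) (k : ℕ)
    {A B : {S : Finset V // S ∈ F ∧ S.card ≤ k + 1}}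
    (w : (kTARGraph F (k + 1)).Walk A B) :
    ∀ (X : Finset V) (hX : X ∈ F) (hXc : X.card = k),
      (A.1 ⊆ X ∨ X ⊆ A.1) →
      ∃ (Y : Finset V) (hY : Y ∈ F) (hYc : Y.card = k),
        (B.1 ⊆ Y ∨ Y ⊆ B.1) ∧ (TJGraph F k).Reachable ⟨X, hX, hXc⟩ ⟨Y, hY, hYc⟩ := by
  induction w with
  | nil => exact fun X hX hXc hInv => ⟨X, hX, hXc, hInv, by rfl⟩
  | @cons u v b hadj w ih =>
    intro X hX hXc hInv
    obtain ⟨Y, hY, hYc, hInv', hreach⟩ :=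
      tar_step F hsup k u.2.1 v.2.1 u.2.2 v.2.2 hadj X hX hXc hInv
    obtain ⟨Z, hZ, hZc, hInvB, hreach'⟩ := ih Y hY hYc hInv'
    exact ⟨Z, hZ, hZc, hInvB, hreach.trans hreach'⟩

lemma tj_edge_tar (F : Finset (Finset V)) (hsup : SupersetClosed F) (k : ℕ)
    {A C : Finset V} (hA : A ∈ F) (hC : C ∈ F)
    (hAc : A.card = k) (hCc : C.card = k) (hadj : (symmDiff A C).card = 2) :
    (kTARGraph F (k + 1)).Reachable ⟨A, hA, by omega⟩ ⟨C, hC, by omega⟩ := by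
  have hU : A ∪ C ∈ F := hsup hA Finset.subset_union_left
  have hsd : (A \ C).card + (C \ A).card = 2 := by
    rw [← Finset.card_union_of_disjoint disjoint_sdiff_sdiff]
    rw [show A \ C ∪ C \ A = symmDiff A C from (symmDiff_def A C).symm, hadj]
  have hAC : (A \ C).card + (A ∩ C).card = A.card := Finset.card_sdiff_add_card_inter A C
  have hCA : (C \ A).card + (C ∩ A).card = C.card := Finset.card_sdiff_add_card_inter C A
  have hint : (A ∩ C).card = (C ∩ A).card := by rw [Finset.inter_comm]
  have h1 : (C \ A).card = 1 := by omega
  have hUc : (A ∪ C).card ≤ k + 1 := by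
    have he : A ∪ C = A ∪ (C \ A) := (Finset.union_sdiff_self_eq_union).symm
    rw [he, Finset.card_union_of_disjoint Finset.disjoint_sdiff]
    omega
  have e1 : (kTARGraph F (k + 1)).Adj ⟨A, hA, by omega⟩ ⟨A ∪ C, hU, hUc⟩ := by
    show (symmDiff A (A ∪ C)).card = 1
    have he : symmDiff A (A ∪ C) = C \ A := by
      ext x
      simp only [Finset.mem_symmDiff, Finset.mem_union, Finset.mem_sdiff]
      tauto
    rw [he, h1]
  have e2 : (kTARGraph F (k + 1)).Adj ⟨A ∪ C, hU, hUc⟩ ⟨C, hC, by omega⟩ := by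
    show (symmDiff (A ∪ C) C).card = 1
    have he : symmDiff (A ∪ C) C = A \ C := by
      ext x
      simp only [Finset.mem_symmDiff, Finset.mem_union, Finset.mem_sdiff]
      tauto
    rw [he]
    omega
  exact e1.reachable.trans e2.reachable

lemma tj_to_tar (F : Finset (Finset V)) (hsup : SupersetClosed F) (k : ℕ)
    {A B : {S : Finset V // S ∈ F ∧ S.card = k}}
    (h : (TJGraph F k).Reachable A B) :
    (kTARGraph F (k + 1)).Reachable ⟨A.1, A.2.1, by omega⟩ ⟨B.1, B.2.1, by omega⟩ := by
  obtain ⟨w⟩ := h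
  induction w with
  | nil => rfl
  | @cons u v b hadj w ih =>
    exact (tj_edge_tar F hsup k u.2.1 v.2.1 u.2.2 v.2.2 hadj).trans ih

theorem stmt17 (F : Finset (Finset V)) (hne : F.Nonempty) (hsup : SupersetClosed F)
    (k : ℕ) (S1 S2 : Finset V) (hS1 : S1 ∈ F) (hS2 : S2 ∈ F)
    (hc1 : S1.card = k) (hc2 : S2.card = k) :
    (TJGraph F k).Reachable ⟨S1, hS1, hc1⟩ ⟨S2, hS2, hc2⟩ ↔
    (kTARGraph F (k + 1)).Reachable ⟨S1, hS1, by omega⟩ ⟨S2, hS2, by omega⟩ := by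
  constructor
  · intro h
    exact tj_to_tar F hsup k h
  · intro h
    obtain ⟨w⟩ := h
    obtain ⟨Y, hY, hYc, hInv, hreach⟩ :=
      tar_to_tj_aux F hsup k w S1 hS1 hc1 (Or.inl subset_rfl)
    have hYS2 : Y = S2 := by
      rcases hInv with h' | h'
      · exact (Finset.eq_of_subset_of_card_le (show S2 ⊆ Y from h') (by omega)).symm
      · exact Finset.eq_of_subset_of_card_le (show Y ⊆ S2 from h') (by omega)
    subst hYS2
    exact hreach
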